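/- The Benjamini–Yekutieli procedure, which sorts p-values p^{(1)} ≤ ... ≤ p^{(m)} and rejects hypotheses (1),...,(j) for the maximal j with p^{(j)} ≤ αj/(m·H_m) where H_m = Σ_{r=1}^m 1/r, controls the false discovery rate at level α under arbitrary dependence among the p-values: E[V/max(R,1)] ≤ α, where V is the number of falsely rejected true nulls and R is the total number of rejections. -/

import Mathlib

open MeasureTheory

open Classical in
/-- The Benjamini–Yekutieli procedure (step-up with thresholds `α j / (m H_m)`,
`H_m = ∑_{r=1}^m 1/r`) controls the false discovery rate at level `α` under arbitrary
dependence: `E[V / max(R,1)] ≤ α`, where `R` is the number of rejections and `V` the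
number of rejected true nulls. -/
theorem benjamini_yekutieli_controls_FDR
    {Ω : Type*} {mΩ : MeasurableSpace Ω} {P : Measure Ω} [IsProbabilityMeasure P]
    (m : ℕ) (hm : 0 < m)
    (p : Fin m → Ω → ℝ) (hpmeas : ∀ i, Measurable (p i))
    (hp01 : ∀ i ω, p i ω ∈ Set.Icc (0 : ℝ) 1)
    (I₀ : Finset (Fin m))
    (hsuper : ∀ i ∈ I₀, ∀ s ∈ Set.Icc (0 : ℝ) 1,
      P {ω | p i ω ≤ s} ≤ ENNReal.ofReal s)
    {α : ℝ} (hα : α ∈ Set.Ioc (0 : ℝ) 1)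
    (Hm : ℝ) (hHm : Hm = ∑ r ∈ Finset.range m, (1 : ℝ) / (r + 1))
    -- number of rejections of the step-up procedure
    (R : Ω → ℕ)
    (hR : ∀ ω, R ω = sSup {r : ℕ | r ≤ m ∧
      r ≤ (Finset.univ.filter fun i : Fin m =>
            p i ω ≤ α * r / (m * Hm)).card})
    -- number of falsely rejected true null hypotheses
    (V : Ω → ℕ)
    (hV : ∀ ω, V ω = (I₀.filter fun i =>
            p i ω ≤ α * (R ω) / (m * Hm)).card) :
    ∫ ω, (V ω : ℝ) / max (R ω : ℝ) 1 ∂P ≤ α := by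
  obtain ⟨hα0, hα1⟩ := hα
  have hm1 : (1 : ℝ) ≤ m := by exact_mod_cast hm
  have hHm1 : (1 : ℝ) ≤ Hm := by
    rw [hHm]
    calc (1:ℝ) = 1/((0:ℕ)+1) := by norm_num
    _ ≤ ∑ r ∈ Finset.range m, (1 : ℝ) / (r + 1) := by
        apply Finset.single_le_sum (f := fun r : ℕ => (1:ℝ)/(r+1))
        · intro i _; positivity
        · simpa using hm
  have hmHm : (0:ℝ) < m * Hm := by nlinarith
  -- thresholds
  set l : ℕ → ℝ := fun k => α * k / (m * Hm) with hl
  have hlmono : ∀ {j k : ℕ}, j ≤ k → l j ≤ l k := by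
    intro j k hjk
    have hjk' : (j:ℝ) ≤ k := by exact_mod_cast hjk
    simp only [hl]
    gcongr
  have hl_nonneg : ∀ k, 0 ≤ l k := by
    intro k
    have hk : (0:ℝ) ≤ k := Nat.cast_nonneg k
    have : (0:ℝ) ≤ α * k := by positivity
    exact div_nonneg this hmHm.le
  have hl_mem : ∀ k, k ≤ m → l k ∈ Set.Icc (0:ℝ) 1 := by
    intro k hk
    refine ⟨hl_nonneg k, ?_⟩
    rw [hl]
    rw [div_le_one hmHm]
    have hk' : (k:ℝ) ≤ m := by exact_mod_cast hk
    nlinarith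
  -- facts about R
  have hRm : ∀ ω, R ω ≤ m := by
    intro ω; rw [hR ω]
    exact csSup_le ⟨0, ⟨Nat.zero_le _, Nat.zero_le _⟩⟩ (fun x hx => hx.1)
  have hRge : ∀ ω (r : ℕ), r ≤ m →
      r ≤ (Finset.univ.filter fun i : Fin m => p i ω ≤ α * r / (m * Hm)).card →
      r ≤ R ω := by
    intro ω r h1 h2; rw [hR ω]
    exact le_csSup ⟨m, fun x hx => hx.1⟩ ⟨h1, h2⟩
  have hVR : ∀ ω, V ω ≠ 0 → 1 ≤ R ω := by
    intro ω hV0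
    have hcard : 0 < (I₀.filter fun i => p i ω ≤ α * (R ω) / (m * Hm)).card := by
      rw [hV ω] at hV0; exact Nat.pos_of_ne_zero hV0
    obtain ⟨i, hi⟩ := Finset.card_pos.mp hcard
    rw [Finset.mem_filter] at hi
    by_contra h
    have hR0 : R ω = 0 := by omega
    have hpi : p i ω ≤ l 1 := by
      have h0 : p i ω ≤ l 0 := by
        have := hi.2; rw [hR0] at this; simpa [hl] using this
      exact h0.trans (hlmono (Nat.zero_le 1))
    refine absurd (hRge ω 1 hm ?_) (by omega)
    refine Finset.card_pos.mpr ⟨i, Finset.mem_filter.mpr ⟨Finset.mem_univ i, ?_⟩⟩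
    simpa [hl] using hpi
  -- the dominating function
  set g : Ω → ℝ := fun ω => ∑ i ∈ I₀,
      ((∑ j ∈ Finset.range m, (1/((j:ℝ)+1) - 1/((j:ℝ)+2)) *
          ({ω' | p i ω' ≤ l (j+1)}.indicator (fun _ => (1:ℝ)) ω)) +
        (1/((m:ℝ)+1)) * ({ω' | p i ω' ≤ l m}.indicator (fun _ => (1:ℝ)) ω)) with hg
  have hind01 : ∀ (s : Set Ω) (ω : Ω),
      (0:ℝ) ≤ s.indicator (fun _ => (1:ℝ)) ω ∧ s.indicator (fun _ => (1:ℝ)) ω ≤ 1 := by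
    intro s ω
    by_cases h : ω ∈ s <;> simp [Set.indicator_apply, h]
  have hcoef : ∀ j : ℕ, (0:ℝ) ≤ 1/((j:ℝ)+1) - 1/((j:ℝ)+2) := by
    intro j
    have h1 : (0:ℝ) < (j:ℝ)+1 := by positivity
    have h2 : (0:ℝ) < (j:ℝ)+2 := by positivity
    rw [sub_nonneg]
    exact one_div_le_one_div_of_le h1 (by linarith)
  have hterm_nonneg : ∀ (i : Fin m) (ω : Ω),
      (0:ℝ) ≤ (∑ j ∈ Finset.range m, (1/((j:ℝ)+1) - 1/((j:ℝ)+2)) *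
          ({ω' | p i ω' ≤ l (j+1)}.indicator (fun _ => (1:ℝ)) ω)) +
        (1/((m:ℝ)+1)) * ({ω' | p i ω' ≤ l m}.indicator (fun _ => (1:ℝ)) ω) := by
    intro i ω
    have h1 : (0:ℝ) ≤ ∑ j ∈ Finset.range m, (1/((j:ℝ)+1) - 1/((j:ℝ)+2)) *
        ({ω' | p i ω' ≤ l (j+1)}.indicator (fun _ => (1:ℝ)) ω) := by
      apply Finset.sum_nonneg
      intro j _
      exact mul_nonneg (hcoef j) (hind01 _ ω).1
    have h2 : (0:ℝ) ≤ (1/((m:ℝ)+1)) * ({ω' | p i ω' ≤ l m}.indicator (fun _ => (1:ℝ)) ω) := by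
      apply mul_nonneg (by positivity) (hind01 _ ω).1
    linarith
  -- pointwise bound
  have key : ∀ ω, (V ω : ℝ) / max (R ω : ℝ) 1 ≤ g ω := by
    intro ω
    by_cases hV0 : V ω = 0
    · rw [hV0]
      simp only [Nat.cast_zero, zero_div]
      exact Finset.sum_nonneg (fun i _ => hterm_nonneg i ω)
    · have hR1 : 1 ≤ R ω := hVR ω hV0
      have hR1' : (1:ℝ) ≤ (R ω : ℝ) := by exact_mod_cast hR1
      have hmax : max (R ω : ℝ) 1 = (R ω : ℝ) := max_eq_left hR1'
      rw [hmax, hV ω]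
      have hsum_eq : ((I₀.filter fun i => p i ω ≤ α * (R ω) / (m * Hm)).card : ℝ) / (R ω : ℝ)
          = ∑ i ∈ I₀, (if p i ω ≤ α * (R ω) / (m * Hm) then (1:ℝ)/(R ω : ℝ) else 0) := by
        rw [← Finset.sum_filter, Finset.sum_const, nsmul_eq_mul]
        ring
      rw [hsum_eq, hg]
      apply Finset.sum_le_sum
      intro i _
      by_cases hpi : p i ω ≤ α * (R ω) / (m * Hm)
      · rw [if_pos hpi]
        -- telescoping lower bound
        have hRωm : R ω ≤ m := hRm ω
        have hind1 : ∀ j ∈ Finset.Ico (R ω - 1) m,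
            ({ω' | p i ω' ≤ l (j+1)}.indicator (fun _ => (1:ℝ)) ω) = 1 := by
          intro j hj
          rw [Finset.mem_Ico] at hj
          have : R ω ≤ j + 1 := by omega
          have : p i ω ≤ l (j+1) := le_trans hpi (hlmono this)
          simp [Set.indicator_apply, this]
        have hindm : ({ω' | p i ω' ≤ l m}.indicator (fun _ => (1:ℝ)) ω) = 1 := by
          have : p i ω ≤ l m := le_trans hpi (hlmono hRωm)
          simp [Set.indicator_apply, this]
        have hsub : ∑ j ∈ Finset.Ico (R ω - 1) m, (1/((j:ℝ)+1) - 1/((j:ℝ)+2)) *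
              ({ω' | p i ω' ≤ l (j+1)}.indicator (fun _ => (1:ℝ)) ω)
            ≤ ∑ j ∈ Finset.range m, (1/((j:ℝ)+1) - 1/((j:ℝ)+2)) *
              ({ω' | p i ω' ≤ l (j+1)}.indicator (fun _ => (1:ℝ)) ω) := by
          apply Finset.sum_le_sum_of_subset_of_nonneg
          · intro x hx
            rw [Finset.mem_Ico] at hx
            exact Finset.mem_range.mpr hx.2
          · intro j _ _
            exact mul_nonneg (hcoef j) (hind01 _ ω).1
        have htel : ∑ j ∈ Finset.Ico (R ω - 1) m, (1/((j:ℝ)+1) - 1/((j:ℝ)+2))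
            = 1/(R ω : ℝ) - 1/((m:ℝ)+1) := by
          have hab : R ω - 1 ≤ m := by omega
          have hrs : ∀ n : ℕ, ∑ j ∈ Finset.range n, (1/((j:ℝ)+1) - 1/((j:ℝ)+2))
              = 1 - 1/((n:ℝ)+1) := by
            intro n
            induction n with
            | zero => norm_num
            | succ k ih =>
              rw [Finset.sum_range_succ, ih]
              push_cast
              ring
          rw [Finset.sum_Ico_eq_sub _ hab, hrs, hrs]
          have : ((R ω - 1 : ℕ) : ℝ) = (R ω : ℝ) - 1 := by
            rw [Nat.cast_sub hR1, Nat.cast_one]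
          rw [this]
          ring
        calc (1:ℝ)/(R ω : ℝ)
            = (1/(R ω : ℝ) - 1/((m:ℝ)+1)) + 1/((m:ℝ)+1) := by ring
          _ = (∑ j ∈ Finset.Ico (R ω - 1) m, (1/((j:ℝ)+1) - 1/((j:ℝ)+2))) + 1/((m:ℝ)+1) := by
              rw [htel]
          _ = (∑ j ∈ Finset.Ico (R ω - 1) m, (1/((j:ℝ)+1) - 1/((j:ℝ)+2)) *
                ({ω' | p i ω' ≤ l (j+1)}.indicator (fun _ => (1:ℝ)) ω))
              + (1/((m:ℝ)+1)) * ({ω' | p i ω' ≤ l m}.indicator (fun _ => (1:ℝ)) ω) := by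
              rw [hindm, mul_one]
              congr 1
              apply Finset.sum_congr rfl
              intro j hj
              rw [hind1 j hj, mul_one]
          _ ≤ _ := by
              have := hsub
              linarith
      · rw [if_neg hpi]
        exact hterm_nonneg i ω
  -- integrability of g
  have hmeas_set : ∀ (i : Fin m) (t : ℝ), MeasurableSet {ω | p i ω ≤ t} :=
    fun i t => measurableSet_le (hpmeas i) measurable_const
  have hint_ind : ∀ (i : Fin m) (t : ℝ),
      Integrable (fun ω => ({ω' | p i ω' ≤ t}.indicator (fun _ => (1:ℝ)) ω)) P := by
    intro i t
    exact (integrable_const (1:ℝ)).indicator (hmeas_set i t)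
  have hint_term : ∀ i : Fin m, Integrable (fun ω =>
      (∑ j ∈ Finset.range m, (1/((j:ℝ)+1) - 1/((j:ℝ)+2)) *
          ({ω' | p i ω' ≤ l (j+1)}.indicator (fun _ => (1:ℝ)) ω)) +
        (1/((m:ℝ)+1)) * ({ω' | p i ω' ≤ l m}.indicator (fun _ => (1:ℝ)) ω)) P := by
    intro i
    apply Integrable.add
    · apply integrable_finset_sum
      intro j _
      exact (hint_ind i (l (j+1))).const_mul _
    · exact (hint_ind i (l m)).const_mul _
  have hint_g : Integrable g P := by
    rw [hg]
    exact integrable_finset_sum _ (fun i _ => hint_term i)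
  -- comparison of integrals
  have hle : ∫ ω, (V ω : ℝ) / max (R ω : ℝ) 1 ∂P ≤ ∫ ω, g ω ∂P := by
    apply integral_mono_of_nonneg
    · filter_upwards with ω
      have h1 : (0:ℝ) < max (R ω : ℝ) 1 := lt_max_of_lt_right one_pos
      positivity
    · exact hint_g
    · filter_upwards with ω
      exact key ω
  refine hle.trans ?_
  -- compute the integral of g
  have hPF : ∀ (i : Fin m) (k : ℕ), i ∈ I₀ → k ≤ m →
      (P {ω | p i ω ≤ l k}).toReal ≤ l k := by
    intro i k hi hk
    have := hsuper i hi (l k) (hl_mem k hk)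
    exact ENNReal.toReal_le_of_le_ofReal (hl_nonneg k) this
  have hPF1 : ∀ (i : Fin m) (t : ℝ), (P {ω | p i ω ≤ t}).toReal ≤ 1 := by
    intro i t
    have := prob_le_one (μ := P) (s := {ω | p i ω ≤ t})
    simpa using ENNReal.toReal_le_of_le_ofReal zero_le_one (by simpa using this)
  have hint_eval : ∀ (i : Fin m) (t : ℝ),
      ∫ ω, ({ω' | p i ω' ≤ t}.indicator (fun _ => (1:ℝ)) ω) ∂P
        = (P {ω | p i ω ≤ t}).toReal := by
    intro i t
    rw [integral_indicator_const (1:ℝ) (hmeas_set i t)]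
    simp
    rfl
  have hg_int_eq : ∫ ω, g ω ∂P = ∑ i ∈ I₀,
      ((∑ j ∈ Finset.range m, (1/((j:ℝ)+1) - 1/((j:ℝ)+2)) *
          (P {ω | p i ω ≤ l (j+1)}).toReal) +
        (1/((m:ℝ)+1)) * (P {ω | p i ω ≤ l m}).toReal) := by
    rw [hg, integral_finset_sum _ (fun i _ => hint_term i)]
    apply Finset.sum_congr rfl
    intro i _
    have hint1 : Integrable (fun ω => ∑ j ∈ Finset.range m, (1/((j:ℝ)+1) - 1/((j:ℝ)+2)) *
        ({ω' | p i ω' ≤ l (j+1)}.indicator (fun _ => (1:ℝ)) ω)) P :=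
      integrable_finset_sum _ (fun j _ => (hint_ind i (l (j+1))).const_mul _)
    rw [integral_add hint1 ((hint_ind i (l m)).const_mul _)]
    congr 1
    · rw [integral_finset_sum _ (fun j _ => (hint_ind i (l (j+1))).const_mul _)]
      apply Finset.sum_congr rfl
      intro j _
      rw [integral_const_mul, hint_eval]
    · rw [integral_const_mul, hint_eval]
  rw [hg_int_eq]
  -- harmonic identity
  have hharm : (∑ j ∈ Finset.range m, 1/((j:ℝ)+2)) + (m:ℝ)/((m:ℝ)+1) = Hm := by
    have h1 : ∑ j ∈ Finset.range (m+1), (1:ℝ)/((j:ℝ)+1) = Hm + 1/((m:ℝ)+1) := by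
      rw [Finset.sum_range_succ, hHm]
    have h2 : ∑ j ∈ Finset.range (m+1), (1:ℝ)/((j:ℝ)+1)
        = (∑ j ∈ Finset.range m, 1/((j:ℝ)+2)) + 1 := by
      rw [Finset.sum_range_succ']
      have hc2 : ∀ j ∈ Finset.range m, (1:ℝ)/(((j+1:ℕ):ℝ)+1) = 1/((j:ℝ)+2) := by
        intro j _; push_cast; ring
      rw [Finset.sum_congr rfl hc2]
      norm_num
    have hm1' : (0:ℝ) < (m:ℝ)+1 := by positivity
    have : (∑ j ∈ Finset.range m, 1/((j:ℝ)+2)) = Hm + 1/((m:ℝ)+1) - 1 := by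
      rw [← h1, h2]; ring
    rw [this]
    field_simp
    ring
  -- bound each summand by α/m
  have hbound : ∀ i ∈ I₀,
      ((∑ j ∈ Finset.range m, (1/((j:ℝ)+1) - 1/((j:ℝ)+2)) *
          (P {ω | p i ω ≤ l (j+1)}).toReal) +
        (1/((m:ℝ)+1)) * (P {ω | p i ω ≤ l m}).toReal) ≤ α / m := by
    intro i hi
    have hstep : ∀ j ∈ Finset.range m,
        (1/((j:ℝ)+1) - 1/((j:ℝ)+2)) * (P {ω | p i ω ≤ l (j+1)}).toReal
          ≤ α/(m*Hm) * (1/((j:ℝ)+2)) := by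
      intro j hj
      rw [Finset.mem_range] at hj
      have hF := hPF i (j+1) hi (by omega)
      have hc := hcoef j
      have hlval : l (j+1) = α * ((j:ℝ)+1) / (m*Hm) := by
        simp only [hl]; push_cast; ring
      calc (1/((j:ℝ)+1) - 1/((j:ℝ)+2)) * (P {ω | p i ω ≤ l (j+1)}).toReal
          ≤ (1/((j:ℝ)+1) - 1/((j:ℝ)+2)) * l (j+1) := by
            exact mul_le_mul_of_nonneg_left hF hc
        _ = α/(m*Hm) * (1/((j:ℝ)+2)) := by
            rw [hlval]
            have hj1 : ((j:ℝ)+1) ≠ 0 := by positivity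
            have hj2 : ((j:ℝ)+2) ≠ 0 := by positivity
            field_simp
            ring
    have hlast : (1/((m:ℝ)+1)) * (P {ω | p i ω ≤ l m}).toReal
        ≤ α/(m*Hm) * ((m:ℝ)/((m:ℝ)+1)) := by
      have hF := hPF i m hi le_rfl
      calc (1/((m:ℝ)+1)) * (P {ω | p i ω ≤ l m}).toReal
          ≤ (1/((m:ℝ)+1)) * l m := by
            exact mul_le_mul_of_nonneg_left hF (by positivity)
        _ = α/(m*Hm) * ((m:ℝ)/((m:ℝ)+1)) := by
            simp only [hl]
            have hmn : ((m:ℝ)+1) ≠ 0 := by positivity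
            field_simp
    calc _ ≤ (∑ j ∈ Finset.range m, α/(m*Hm) * (1/((j:ℝ)+2)))
            + α/(m*Hm) * ((m:ℝ)/((m:ℝ)+1)) := by
          apply add_le_add (Finset.sum_le_sum hstep) hlast
      _ = α/(m*Hm) * ((∑ j ∈ Finset.range m, 1/((j:ℝ)+2)) + (m:ℝ)/((m:ℝ)+1)) := by
          rw [← Finset.mul_sum]; ring
      _ = α/(m*Hm) * Hm := by rw [hharm]
      _ = α / m := by
          have hmne : (m:ℝ) ≠ 0 := by positivity
          have hHmne : Hm ≠ 0 := by linarith
          field_simp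
  calc ∑ i ∈ I₀, ((∑ j ∈ Finset.range m, (1/((j:ℝ)+1) - 1/((j:ℝ)+2)) *
          (P {ω | p i ω ≤ l (j+1)}).toReal) +
        (1/((m:ℝ)+1)) * (P {ω | p i ω ≤ l m}).toReal)
      ≤ ∑ _i ∈ I₀, α / m := Finset.sum_le_sum hbound
    _ = (I₀.card : ℝ) * (α / m) := by rw [Finset.sum_const, nsmul_eq_mul]
    _ ≤ (m : ℝ) * (α / m) := by
        apply mul_le_mul_of_nonneg_right ?_ (by positivity)
        have : I₀.card ≤ m := by
          have := Finset.card_le_univ I₀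
          simpa using this
        exact_mod_cast this
    _ = α := by
        have hmne : (m:ℝ) ≠ 0 := by positivity
        field_simp
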